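/- Fix λ > 0 and K ≥ 0. There exists T > 0 such that for all t ≥ T, setting s = t + √t, for every x with |x| ≥ λt + t^{2/3}, one has ν_x^{(s)}([−K, K]) ≥ (1/2) · e^{(λ/4) t^{1/6}} · ν_x^{(t)}([−K, K]), where ν_x^{(u)} denotes the Gaussian probability measure on ℝ with mean x − λu and variance u. Equivalently, P(|x + B_s − λs| ≤ K) / P(|x + B_t − λt| ≤ K) ≥ (1/2) e^{(λ/4) t^{1/6}} uniformly over such x. -/

import Mathlib

open MeasureTheory ProbabilityTheory Real

lemma gauss_upper {m v K : ℝ} (hv : 0 < v) (hK : 0 ≤ K) (hmK : K ≤ |m|) :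
    (gaussianReal m v.toNNReal (Set.Icc (-K) K)).toReal
      ≤ 2*K * ((Real.sqrt (2*π*v))⁻¹ * Real.exp (-(|m|-K)^2/(2*v))) := by
  have hvne : v.toNNReal ≠ 0 := by
    simp only [ne_eq, Real.toNNReal_eq_zero, not_le]; exact hv
  have hcoe : ((v.toNNReal : ℝ)) = v := Real.coe_toNNReal v hv.le
  rw [gaussianReal_apply_eq_integral _ hvne,
    ENNReal.toReal_ofReal (setIntegral_nonneg measurableSet_Icc fun _ _ =>
      gaussianPDFReal_nonneg _ _ _)]
  have hbound : ∀ y ∈ Set.Icc (-K) K, gaussianPDFReal m v.toNNReal y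
      ≤ (Real.sqrt (2*π*v))⁻¹ * Real.exp (-(|m|-K)^2/(2*v)) := by
    intro y hy
    rw [gaussianPDFReal, hcoe]
    apply mul_le_mul_of_nonneg_left ?_ (inv_nonneg.2 (Real.sqrt_nonneg _))
    apply Real.exp_le_exp.2
    have hyK : |y| ≤ K := abs_le.mpr ⟨hy.1, hy.2⟩
    have h1 : |m| - K ≤ |y - m| := by
      calc |m| - K ≤ |m| - |y| := by linarith
        _ ≤ |m - y| := abs_sub_abs_le_abs_sub m y
        _ = |y - m| := abs_sub_comm m y
    have h2 : (|m|-K)^2 ≤ (y-m)^2 := by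
      rw [← sq_abs (y-m)]
      exact pow_le_pow_left₀ (by linarith) h1 2
    have h3 : -(y-m)^2 ≤ -(|m|-K)^2 := by linarith
    exact (div_le_div_iff_of_pos_right (by positivity : (0:ℝ) < 2*v)).2 h3
  calc ∫ y in Set.Icc (-K) K, gaussianPDFReal m v.toNNReal y
      ≤ ∫ _y in Set.Icc (-K) K, (Real.sqrt (2*π*v))⁻¹ * Real.exp (-(|m|-K)^2/(2*v)) :=
        setIntegral_mono_on (integrable_gaussianPDFReal _ _).integrableOn
          (integrableOn_const (by rw [Real.volume_Icc]; exact ENNReal.ofReal_ne_top))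
          measurableSet_Icc hbound
    _ = 2*K * ((Real.sqrt (2*π*v))⁻¹ * Real.exp (-(|m|-K)^2/(2*v))) := by
        rw [setIntegral_const, measureReal_def, Real.volume_Icc, smul_eq_mul,
          ENNReal.toReal_ofReal (by linarith : (0:ℝ) ≤ K - -K)]
        ring

lemma gauss_lower {m v K : ℝ} (hv : 0 < v) (hK : 0 ≤ K) :
    2*K * ((Real.sqrt (2*π*v))⁻¹ * Real.exp (-(|m|+K)^2/(2*v)))
      ≤ (gaussianReal m v.toNNReal (Set.Icc (-K) K)).toReal := by
  have hvne : v.toNNReal ≠ 0 := by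
    simp only [ne_eq, Real.toNNReal_eq_zero, not_le]; exact hv
  have hcoe : ((v.toNNReal : ℝ)) = v := Real.coe_toNNReal v hv.le
  rw [gaussianReal_apply_eq_integral _ hvne,
    ENNReal.toReal_ofReal (setIntegral_nonneg measurableSet_Icc fun _ _ =>
      gaussianPDFReal_nonneg _ _ _)]
  have hbound : ∀ y ∈ Set.Icc (-K) K,
      (Real.sqrt (2*π*v))⁻¹ * Real.exp (-(|m|+K)^2/(2*v)) ≤ gaussianPDFReal m v.toNNReal y := by
    intro y hy
    rw [gaussianPDFReal, hcoe]
    apply mul_le_mul_of_nonneg_left ?_ (inv_nonneg.2 (Real.sqrt_nonneg _))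
    apply Real.exp_le_exp.2
    have hyK : |y| ≤ K := abs_le.mpr ⟨hy.1, hy.2⟩
    have h1 : |y - m| ≤ |m| + K := by
      calc |y - m| ≤ |y| + |m| := abs_sub _ _
        _ ≤ |m| + K := by linarith
    have h2 : (y-m)^2 ≤ (|m|+K)^2 := by
      rw [← sq_abs (y-m)]
      exact pow_le_pow_left₀ (abs_nonneg _) h1 2
    have h3 : -(|m|+K)^2 ≤ -(y-m)^2 := by linarith
    exact (div_le_div_iff_of_pos_right (by positivity : (0:ℝ) < 2*v)).2 h3
  calc 2*K * ((Real.sqrt (2*π*v))⁻¹ * Real.exp (-(|m|+K)^2/(2*v)))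
      = ∫ _y in Set.Icc (-K) K, (Real.sqrt (2*π*v))⁻¹ * Real.exp (-(|m|+K)^2/(2*v)) := by
        rw [setIntegral_const, measureReal_def, Real.volume_Icc, smul_eq_mul,
          ENNReal.toReal_ofReal (by linarith : (0:ℝ) ≤ K - -K)]
        ring
    _ ≤ ∫ y in Set.Icc (-K) K, gaussianPDFReal m v.toNNReal y :=
        setIntegral_mono_on
          (integrableOn_const (by rw [Real.volume_Icc]; exact ENNReal.ofReal_ne_top))
          (integrable_gaussianPDFReal _ _).integrableOn
          measurableSet_Icc hbound

lemma ratio_est(m₁ m₂ : ℝ) {s t : ℝ} (K c : ℝ) (hs : 0 < s) (ht : 0 < t) (hK : 0 ≤ K)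
    (hm : K ≤ |m₂|) (hst : s ≤ 4*t)
    (key : c ≤ (|m₂|-K)^2/(2*t) - (|m₁|+K)^2/(2*s)) :
    (gaussianReal m₁ s.toNNReal (Set.Icc (-K) K)).toReal
      ≥ 1/2 * Real.exp c * (gaussianReal m₂ t.toNNReal (Set.Icc (-K) K)).toReal := by
  have hup := gauss_upper (m := m₂) (v := t) (K := K) ht hK hm
  have hlo := gauss_lower (m := m₁) (v := s) (K := K) hs hK
  have hsqpos : 0 < Real.sqrt (2*π*t) := Real.sqrt_pos.2 (by positivity)
  have hsqpos' : 0 < Real.sqrt (2*π*s) := Real.sqrt_pos.2 (by positivity)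
  have hsqrt : Real.sqrt (2*π*s) ≤ 2 * Real.sqrt (2*π*t) := by
    have h4 : (2:ℝ) * Real.sqrt (2*π*t) = Real.sqrt (4*(2*π*t)) := by
      rw [show (4:ℝ)*(2*π*t) = (2*Real.sqrt (2*π*t))^2 by
        rw [mul_pow, sq_sqrt (by positivity : (0:ℝ) ≤ 2*π*t)]; ring]
      exact (Real.sqrt_sq (by positivity)).symm
    rw [h4]
    apply Real.sqrt_le_sqrt
    nlinarith [pi_pos]
  have h2 : (2 * Real.sqrt (2*π*t))⁻¹ ≤ (Real.sqrt (2*π*s))⁻¹ :=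
    inv_anti₀ hsqpos' hsqrt
  have hexp : Real.exp c * Real.exp (-(|m₂|-K)^2/(2*t)) ≤ Real.exp (-(|m₁|+K)^2/(2*s)) := by
    rw [← Real.exp_add]
    apply Real.exp_le_exp.2
    have e1 : -(|m₂|-K)^2/(2*t) = -((|m₂|-K)^2/(2*t)) := by ring
    have e2 : -(|m₁|+K)^2/(2*s) = -((|m₁|+K)^2/(2*s)) := by ring
    rw [e1, e2]; linarith
  calc 1/2 * Real.exp c * (gaussianReal m₂ t.toNNReal (Set.Icc (-K) K)).toReal
      ≤ 1/2 * Real.exp c * (2*K * ((Real.sqrt (2*π*t))⁻¹ * Real.exp (-(|m₂|-K)^2/(2*t)))) := by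
        apply mul_le_mul_of_nonneg_left hup (by positivity)
    _ = 2*K * ((2 * Real.sqrt (2*π*t))⁻¹ * (Real.exp c * Real.exp (-(|m₂|-K)^2/(2*t)))) := by
        rw [mul_inv]; ring
    _ ≤ 2*K * ((Real.sqrt (2*π*s))⁻¹ * Real.exp (-(|m₁|+K)^2/(2*s))) := by
        apply mul_le_mul_of_nonneg_left ?_ (by linarith : (0:ℝ) ≤ 2*K)
        exact mul_le_mul h2 hexp (by positivity) (by positivity)
    _ ≤ _ := hlo

set_option maxHeartbeats 1000000 in
/-- Ratio bound for `s = t + √t`: for `t` large, uniformly over `|x| ≥ λt + t^{2/3}`,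
`P(|x + B_s - λs| ≤ K) ≥ (1/2) e^{(λ/4) t^{1/6}} P(|x + B_t - λt| ≤ K)`, where
`x + B_u - λu` has law `gaussianReal (x - λu) u`. -/
theorem gaussian_ratio_bound_outer (lam K : ℝ) (hlam : 0 < lam) (hK : 0 ≤ K) :
    ∃ T > 0, ∀ t ≥ T, ∀ x : ℝ, lam * t + t ^ ((2 : ℝ) / 3) ≤ |x| →
      ((gaussianReal (x - lam * (t + Real.sqrt t)) (t + Real.sqrt t).toNNReal
          (Set.Icc (-K) K)).toReal
        ≥ 1 / 2 * Real.exp (lam / 4 * t ^ ((1 : ℝ) / 6))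
          * (gaussianReal (x - lam * t) t.toNNReal (Set.Icc (-K) K)).toReal) := by
  set R : ℝ := 4*lam + 24*K + 8*K/lam + 8 with hRdef
  have hKl : 0 ≤ 8*K/lam := by positivity
  have hR0 : 0 < R := by rw [hRdef]; positivity
  refine ⟨R^6, by positivity, ?_⟩
  intro t ht x hx
  have ht0 : 0 < t := lt_of_lt_of_le (by positivity) ht
  set r : ℝ := t ^ ((1:ℝ)/6) with hrdef
  have hr0 : 0 < r := Real.rpow_pos_of_pos ht0 _
  have hr6 : r^6 = t := by
    rw [hrdef, ← Real.rpow_natCast (t ^ ((1:ℝ)/6)) 6, ← Real.rpow_mul ht0.le]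
    norm_num
  have hr3 : r^3 = Real.sqrt t := by
    rw [hrdef, ← Real.rpow_natCast (t ^ ((1:ℝ)/6)) 3, ← Real.rpow_mul ht0.le,
      Real.sqrt_eq_rpow]
    norm_num
  have hr4 : r^4 = t ^ ((2:ℝ)/3) := by
    rw [hrdef, ← Real.rpow_natCast (t ^ ((1:ℝ)/6)) 4, ← Real.rpow_mul ht0.le]
    norm_num
  have hrR : R ≤ r := by
    have hRr : R = ((R^6 : ℝ)) ^ ((1:ℝ)/6) := by
      rw [← Real.rpow_natCast R 6, ← Real.rpow_mul hR0.le]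
      norm_num
    rw [hrdef, hRr]
    exact Real.rpow_le_rpow (by positivity) ht (by norm_num)
  have hc : lam / 4 * t ^ ((1:ℝ)/6) = lam/4 * r := rfl
  clear_value r
  -- basic consequences
  have hr8 : 8 ≤ r := by rw [hRdef] at hrR; linarith
  have hr1 : 1 ≤ r := by linarith
  have hrlam : 4*lam ≤ r := by rw [hRdef] at hrR; linarith
  have hrK : 24*K ≤ r := by rw [hRdef] at hrR; linarith
  have hp13 : r ≤ r^3 := le_self_pow₀ hr1 (by norm_num)
  have hp14 : r ≤ r^4 := le_self_pow₀ hr1 (by norm_num)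
  have hr8K : 8*K ≤ lam*r^3 := by
    have h1 : 8*K/lam ≤ r := by rw [hRdef] at hrR; linarith
    have h2 : 8*K ≤ r*lam := (div_le_iff₀ hlam).mp h1
    have h3 : lam*r ≤ lam*r^3 := mul_le_mul_of_nonneg_left hp13 hlam.le
    linarith
  have hKr4 : K ≤ r^4 := by linarith
  have hs0 : 0 < t + Real.sqrt t := by positivity
  have hsr : t + Real.sqrt t = r^6 + r^3 := by rw [hr6, hr3]
  have hp36 : r^3 ≤ r^6 := pow_le_pow_right₀ hr1 (by norm_num)
  have hp6 : (0:ℝ) ≤ r^6 := pow_nonneg hr0.le 6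
  have hp3 : (0:ℝ) ≤ r^3 := pow_nonneg hr0.le 3
  have hlr3 : 0 ≤ lam*r^3 := mul_nonneg hlam.le hp3
  have hlr6 : 0 ≤ lam*r^6 := mul_nonneg hlam.le hp6
  have h4l3 : 4*lam*r^3 ≤ r*r^3 := mul_le_mul_of_nonneg_right hrlam hp3
  have hst4 : t + Real.sqrt t ≤ 4*t := by
    rw [hsr, ← hr6]; linarith [hp36, hp6]
  have ht23 : (0:ℝ) ≤ t ^ ((2:ℝ)/3) := Real.rpow_nonneg ht0.le _
  rcases le_abs.mp hx with hx1 | hx1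
  · -- case x ≥ lam t + t^{2/3}
    set a : ℝ := x - lam*t with hadef
    have ha : r^4 ≤ a := by rw [hadef]; linarith [hr4.le, hr4.ge]
    clear_value a
    have hm2 : |a| = a := abs_of_nonneg (le_trans (by positivity : (0:ℝ) ≤ r^4) ha)
    have hm1 : |x - lam*(t + Real.sqrt t)| = a - lam*r^3 := by
      rw [show x - lam*(t + Real.sqrt t) = a - lam*Real.sqrt t by rw [hadef]; ring, ← hr3]
      apply abs_of_nonneg
      linarith [ha, h4l3, hlr3]
    apply ratio_est _ _ K _ hs0 ht0 hK (by rw [hm2]; linarith) hst4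
    rw [hm1, hm2, hsr, ← hr6]
    -- key inequality case 1
    have hsplit : (a-K)^2/(2*r^6) - (a - lam*r^3 + K)^2/(2*(r^6+r^3))
        = ((a-K)^2*(2*(r^6+r^3)) - (a - lam*r^3 + K)^2*(2*r^6)) / ((2*r^6)*(2*(r^6+r^3))) := by
      field_simp
    rw [hsplit, le_div_iff₀ (by positivity)]
    have e2 : (3:ℝ)/4*(lam*r^3) ≤ lam*r^3 - 2*K := by linarith
    have e3 : r^4 ≤ 2*a - lam*r^3 := by linarith [ha, h4l3, hlr3]
    have e4' : (3/4*(lam*r^3))*r^4 ≤ (lam*r^3 - 2*K)*(2*a - lam*r^3) :=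
      mul_le_mul e2 e3 (by positivity) (by linarith)
    have e4 := mul_le_mul_of_nonneg_left e4' (by positivity : (0:ℝ) ≤ r^6)
    have hr3c : (2:ℝ) ≤ r^3 := by linarith [hp13]
    have hid1 : (a-K)^2*(2*(r^6+r^3)) - (a - lam*r^3 + K)^2*(2*r^6)
        = 2*((a-K)^2*r^3) + 2*(r^6*((lam*r^3 - 2*K)*(2*a - lam*r^3))) := by ring
    linarith [e4, mul_nonneg (sq_nonneg (a-K)) (pow_nonneg hr0.le 3),
      mul_le_mul_of_nonneg_left hr3c (mul_nonneg hlam.le (pow_nonneg hr0.le 10)), hid1]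
  · -- case x ≤ -(lam t + t^{2/3})
    set a : ℝ := lam*t - x with hadef
    have h6l : lam*r^6 = lam*t := by rw [hr6]
    have ha : 2*lam*r^6 + r^4 ≤ a := by
      rw [hadef]; linarith [hr4.le, hr4.ge]
    clear_value a
    have ha0 : 0 ≤ a := by linarith [pow_nonneg hr0.le 4, hlr6]
    have hm2 : |x - lam*t| = a := by
      rw [show x - lam*t = -a by rw [hadef]; ring, abs_neg]
      exact abs_of_nonneg ha0
    have hm1 : |x - lam*(t + Real.sqrt t)| = a + lam*r^3 := by
      rw [show x - lam*(t + Real.sqrt t) = -(a + lam*Real.sqrt t) by rw [hadef]; ring, ← hr3,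
        abs_neg]
      apply abs_of_nonneg
      linarith [ha0, hlr3]
    apply ratio_est _ _ K _ hs0 ht0 hK
      (by rw [hm2]; linarith [ha, hKr4, hlr6]) hst4
    rw [hm1, hm2, hsr, ← hr6]
    have hsplit : (a-K)^2/(2*r^6) - (a + lam*r^3 + K)^2/(2*(r^6+r^3))
        = ((a-K)^2*(2*(r^6+r^3)) - (a + lam*r^3 + K)^2*(2*r^6)) / ((2*r^6)*(2*(r^6+r^3))) := by
      field_simp
    rw [hsplit, le_div_iff₀ (by positivity)]
    set d : ℝ := a - (2*lam*r^6 + r^4) with hddef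
    have hd : 0 ≤ d := by rw [hddef]; linarith
    have haeq : a = 2*lam*r^6 + r^4 + d := by rw [hddef]; ring
    clear_value d
    have hid : (a-K)^2*(2*(r^6+r^3)) - (a + lam*r^3 + K)^2*(2*r^6)
        = 2*((2*lam*r^6+r^4-K)^2*(r^6+r^3) - (2*lam*r^6+r^4+lam*r^3+K)^2*r^6)
          + 2*((2*lam*r^9 + 2*r^7 - 4*K*r^6 - 2*K*r^3)*d) + 2*(r^3*d^2) := by
      rw [haeq]; ring
    have hC1 : 0 ≤ 2*lam*r^9 + 2*r^7 - 4*K*r^6 - 2*K*r^3 := by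
      have g1 : 24*K*r^6 ≤ r*r^6 := mul_le_mul_of_nonneg_right hrK (by positivity)
      have g2 : 24*K*r^3 ≤ r*r^3 := mul_le_mul_of_nonneg_right hrK (by positivity)
      have g3 : r^4 ≤ r^7 := pow_le_pow_right₀ hr1 (by norm_num)
      have g4 : 0 ≤ lam*r^9 := mul_nonneg hlam.le (pow_nonneg hr0.le 9)
      linarith
    have hC0 : lam/2*(r^13+r^10)
        ≤ (2*lam*r^6+r^4-K)^2*(r^6+r^3) - (2*lam*r^6+r^4+lam*r^3+K)^2*r^6 := by
      have f1 : 4*lam*(lam*r^12) ≤ r*(lam*r^12) :=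
        mul_le_mul_of_nonneg_right hrlam (by positivity)
      have f2 : 24*K*(lam*r^12) ≤ r*(lam*r^12) :=
        mul_le_mul_of_nonneg_right hrK (by positivity)
      have f3 : 24*K*(lam*r^9) ≤ r*(lam*r^9) :=
        mul_le_mul_of_nonneg_right hrK (by positivity)
      have f4 : 24*K*(r^10) ≤ r*r^10 :=
        mul_le_mul_of_nonneg_right hrK (by positivity)
      have f5 : 24*K*(r^7) ≤ r*r^7 :=
        mul_le_mul_of_nonneg_right hrK (by positivity)
      have f6 : r^10 ≤ r^13 := pow_le_pow_right₀ hr1 (by norm_num)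
      have f7 : r^8 ≤ r^11 := pow_le_pow_right₀ hr1 (by norm_num)
      have f9 : lam*r^10 ≤ lam*r^13 := mul_le_mul_of_nonneg_left f6 hlam.le
      have f10 : 0 ≤ K*K*r^3 := by positivity
      have hexp : (2*lam*r^6+r^4-K)^2*(r^6+r^3) - (2*lam*r^6+r^4+lam*r^3+K)^2*r^6
          = 2*lam*r^13 + r^11 + K^2*r^3 - lam^2*r^12 - 8*K*lam*r^12 - 4*K*r^10
            - 6*K*lam*r^9 - 2*K*r^7 := by ring
      rw [hexp]
      linarith only [f1, f2, f3, f4, f5, f6, f7, f9, f10,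
        mul_nonneg hlam.le (pow_nonneg hr0.le 13), pow_nonneg hr0.le 11,
        mul_nonneg hlam.le (pow_nonneg hr0.le 10), pow_nonneg hr0.le 8]
    rw [hid]
    linarith [hC0, mul_nonneg hC1 hd, mul_nonneg hp3 (sq_nonneg d)]
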